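/- For all k ∈ ℕ and all m ≥ 1: Σ_{0 ≤ a ≤ k} Σ_{0 ≤ b ≤ k, a ≡ b (mod m)} C(k,a)·C(k,b) = Σ_{0 ≤ c ≤ 2k, c ≡ k (mod m)} C(2k, c), where C(·,·) denotes binomial coefficients and congruences are Nat.ModEq. -/

import Mathlib

open Finset

/-- The dimension of the centralizer algebra `Z_k(C_n)`,
`Σ_{a ≡ b mod m} C(k,a)·C(k,b)`, equals the coefficient of `z^k` in
`(1+z)^{2k}` reduced modulo `z^m = 1`, i.e. `Σ_{c ≡ k mod m} C(2k,c)`. -/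
theorem stmt2 (k m : ℕ) (hm : 1 ≤ m) :
    (∑ a ∈ Finset.range (k + 1), ∑ b ∈ Finset.range (k + 1),
        if a ≡ b [MOD m] then k.choose a * k.choose b else 0) =
      ∑ c ∈ Finset.range (2 * k + 1),
        if c ≡ k [MOD m] then (2 * k).choose c else 0 := by
  classical
  set f : ℕ × ℕ → ℕ := fun p =>
    if p.1 + p.2 ≡ k [MOD m] then k.choose p.1 * k.choose p.2 else 0 with hf
  -- Step 1: LHS = S over range (k+1) × range (k+1)
  have step1 : (∑ a ∈ Finset.range (k + 1), ∑ b ∈ Finset.range (k + 1),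
        if a ≡ b [MOD m] then k.choose a * k.choose b else 0) =
      ∑ a ∈ Finset.range (k + 1), ∑ j ∈ Finset.range (k + 1), f (a, j) := by
    refine Finset.sum_congr rfl fun a _ => ?_
    rw [← Finset.sum_range_reflect]
    refine Finset.sum_congr rfl fun j hj => ?_
    rw [Finset.mem_range] at hj
    have hj' : j ≤ k := Nat.lt_succ_iff.mp hj
    have hsub : k + 1 - 1 - j = k - j := by omega
    rw [hsub]
    have hiff : (a ≡ k - j [MOD m]) ↔ (a + j ≡ k [MOD m]) := by
      constructor
      · intro h
        have := h.add_right j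
        rwa [Nat.sub_add_cancel hj'] at this
      · intro h
        refine Nat.ModEq.add_right_cancel' j ?_
        rwa [Nat.sub_add_cancel hj']
    rw [Nat.choose_symm hj']
    simp [hf, hiff]
  -- Step 2: RHS = sum of f over the big square
  have step2 : (∑ c ∈ Finset.range (2 * k + 1),
        if c ≡ k [MOD m] then (2 * k).choose c else 0) =
      ∑ a ∈ Finset.range (2 * k + 1), ∑ j ∈ Finset.range (2 * k + 1), f (a, j) := by
    have expand : ∀ c ∈ Finset.range (2 * k + 1),
        (if c ≡ k [MOD m] then (2 * k).choose c else 0) =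
        ∑ p ∈ Finset.HasAntidiagonal.antidiagonal c, f p := by
      intro c _
      rw [two_mul, Nat.add_choose_eq]
      by_cases h : c ≡ k [MOD m]
      · rw [if_pos h]
        refine Finset.sum_congr rfl fun p hp => ?_
        rw [Finset.HasAntidiagonal.mem_antidiagonal] at hp
        simp [hf, hp, h]
      · rw [if_neg h]
        refine (Finset.sum_eq_zero fun p hp => ?_).symm
        rw [Finset.HasAntidiagonal.mem_antidiagonal] at hp
        simp [hf, hp, h]
    rw [Finset.sum_congr rfl expand]
    have hdisj : (↑(Finset.range (2 * k + 1)) : Set ℕ).PairwiseDisjoint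
        Finset.HasAntidiagonal.antidiagonal := by
      intro c _ c' _ hne
      refine Finset.disjoint_left.mpr fun p hp hp' => hne ?_
      rw [Finset.HasAntidiagonal.mem_antidiagonal] at hp hp'
      omega
    rw [← Finset.sum_biUnion hdisj]
    have hbu : (Finset.range (2 * k + 1)).biUnion Finset.HasAntidiagonal.antidiagonal =
        (Finset.range (2 * k + 1) ×ˢ Finset.range (2 * k + 1)).filter
          (fun p => p.1 + p.2 ≤ 2 * k) := by
      ext p
      simp only [Finset.mem_biUnion, Finset.mem_range, Finset.HasAntidiagonal.mem_antidiagonal,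
        Finset.mem_filter, Finset.mem_product]
      constructor
      · rintro ⟨c, hc, rfl⟩; omega
      · rintro ⟨⟨h1, h2⟩, h3⟩; exact ⟨p.1 + p.2, by omega, rfl⟩
    rw [hbu, Finset.sum_filter_of_ne, Finset.sum_product]
    intro p hp hfp
    rw [hf] at hfp
    simp only at hfp
    by_contra hle
    apply hfp
    rcases Nat.lt_or_ge k p.1 with h1 | h1
    · rw [Nat.choose_eq_zero_of_lt h1, zero_mul]; simp
    · rw [Nat.choose_eq_zero_of_lt (by omega : k < p.2), mul_zero]; simp
  -- Step 3: the big square sum equals the small square sum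
  have step3 : (∑ a ∈ Finset.range (2 * k + 1), ∑ j ∈ Finset.range (2 * k + 1), f (a, j)) =
      ∑ a ∈ Finset.range (k + 1), ∑ j ∈ Finset.range (k + 1), f (a, j) := by
    have hsub : Finset.range (k + 1) ⊆ Finset.range (2 * k + 1) := by
      apply Finset.range_subset_range.mpr; omega
    rw [← Finset.sum_subset hsub]
    · refine Finset.sum_congr rfl fun a _ => ?_
      rw [← Finset.sum_subset hsub]
      intro j _ hj
      rw [Finset.mem_range, not_lt] at hj
      simp [hf, Nat.choose_eq_zero_of_lt (by omega : k < j)]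
    · intro a _ ha
      rw [Finset.mem_range, not_lt] at ha
      refine Finset.sum_eq_zero fun j _ => ?_
      simp [hf, Nat.choose_eq_zero_of_lt (by omega : k < a)]
  rw [step1, step2, step3]
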